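/- Let σ = conv{x_1,…,x_{d+1}} ⊂ ℝ^d be a d-dimensional simplex (the points x_1,…,x_{d+1} are affinely independent). Then for every t ∈ ℝ^d satisfying ⟨x_k, t⟩ < 1 for all k = 1,…,d+1, one has ∫_σ (1 − ⟨x, t⟩)^{−(d+1)} λ(dx) = λ(σ) / ∏_{k=1}^{d+1} (1 − ⟨x_k, t⟩), where λ denotes d-dimensional Lebesgue measure and ⟨·,·⟩ the standard inner product on ℝ^d. -/

import Mathlib

open MeasureTheory Finset Matrix Pointwise


lemma aux_mem_hull_iff {n d : ℕ} (v : Fin n → (Fin d → ℝ)) (y : Fin d → ℝ) :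
    y ∈ convexHull ℝ (Set.range v) ↔
      ∃ w : Fin n → ℝ, (∀ k, 0 ≤ w k) ∧ ∑ k, w k = 1 ∧ ∑ k, w k • v k = y := by
  rw [convexHull_range_eq_exists_affineCombination]
  constructor
  · rintro ⟨s, w, hw0, hw1, rfl⟩
    refine ⟨fun k => if k ∈ s then w k else 0, fun k => ?_, ?_, ?_⟩
    · dsimp only; split
      · exact hw0 _ ‹_›
      · exact le_refl 0
    · simp only; rw [Finset.sum_ite_mem, Finset.univ_inter, hw1]
    · rw [s.affineCombination_eq_linear_combination v w hw1]
      simp only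
      simp_rw [ite_smul, zero_smul]
      rw [Finset.sum_ite_mem, Finset.univ_inter]
  · rintro ⟨w, h0, h1, rfl⟩
    exact ⟨Finset.univ, w, fun i _ => h0 i, by simpa using h1,
      Finset.univ.affineCombination_eq_linear_combination v w (by simpa using h1)⟩


variable {d : ℕ}

/-- bordered matrix of a vertex family -/
noncomputable def auxM (z : Fin (d + 1) → Fin d → ℝ) : Matrix (Fin d ⊕ Unit) (Fin d ⊕ Unit) ℝ :=
  Matrix.fromBlocks (Matrix.of fun k j => z k.succ j) (Matrix.of fun _ _ => 1)
    (Matrix.of fun _ j => z 0 j) 1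

noncomputable def auxB (z : Fin (d + 1) → Fin d → ℝ) : Matrix (Fin d) (Fin d) ℝ :=
  Matrix.of fun i k => z k.succ i - z 0 i

lemma auxM_det (z : Fin (d + 1) → Fin d → ℝ) : (auxM z).det = (auxB z).det := by
  have hE : (Matrix.fromBlocks 1 (Matrix.of fun (_ : Fin d) (_ : Unit) => (-1 : ℝ)) 0 1
      * auxM z) = Matrix.fromBlocks (Matrix.of fun k j => z k.succ j - z 0 j) 0
      (Matrix.of fun _ j => z 0 j) 1 := by
    rw [auxM, Matrix.fromBlocks_multiply]
    ext k j
    cases k <;> cases j <;>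
      simp [Matrix.mul_apply, Fintype.sum_unique, sub_eq_add_neg, Matrix.one_apply]
  have h1 : ((Matrix.fromBlocks 1 (Matrix.of fun (_ : Fin d) (_ : Unit) => (-1 : ℝ)) 0 1 :
      Matrix (Fin d ⊕ Unit) (Fin d ⊕ Unit) ℝ)).det = 1 := by
    rw [Matrix.det_fromBlocks_zero₂₁]; simp
  have := congrArg Matrix.det hE
  rw [Matrix.det_mul, h1, one_mul] at this
  rw [this, Matrix.det_fromBlocks_zero₁₂]
  have : (Matrix.of fun k j => z k.succ j - z 0 j) = (auxB z).transpose := by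
    ext k j; simp [auxB, Matrix.transpose]
  rw [this, Matrix.det_transpose, Matrix.det_one, mul_one]

lemma auxB_det (x : Fin (d + 1) → Fin d → ℝ) (a : Fin (d + 1) → ℝ) (t : Fin d → ℝ)
    (ha : ∀ k, a k = 1 - ∑ i, x k i * t i) (ha0 : ∀ k, a k ≠ 0) :
    (auxB (fun k => (a k)⁻¹ • x k)).det = (∏ k, a k)⁻¹ * (auxB x).det := by
  set P : Matrix (Fin d ⊕ Unit) (Fin d ⊕ Unit) ℝ :=
    Matrix.fromBlocks 1 (Matrix.of fun j (_ : Unit) => -t j) 0 1 with hPdef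
  set Dm : Matrix (Fin d ⊕ Unit) (Fin d ⊕ Unit) ℝ :=
    Matrix.fromBlocks (Matrix.diagonal fun k => (a k.succ)⁻¹) 0 0
      (Matrix.of fun _ _ => (a 0)⁻¹) with hDdef
  have key : Dm * (auxM x * P) = auxM (fun k => (a k)⁻¹ • x k) := by
    rw [auxM, auxM, hPdef, hDdef, Matrix.fromBlocks_multiply, Matrix.fromBlocks_multiply]
    have haa : ∀ k, (∑ i, t i * x k i) = 1 - a k := by
      intro k; rw [ha k]; ring_nf; exact Finset.sum_congr rfl fun i _ => mul_comm _ _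
    ext k j
    cases k <;> cases j <;>
      simp [Matrix.mul_apply, Fintype.sum_unique, Matrix.one_apply, Matrix.diagonal,
        Finset.mul_sum, mul_sub, sub_eq_add_neg, Finset.sum_add_distrib, mul_comm] <;>
      simp only [haa, sub_sub_cancel] <;>
      (ring_nf; rw [mul_inv_cancel₀ (ha0 _)])
  have hdet := congrArg Matrix.det key
  have hdP : P.det = 1 := by
    rw [hPdef, Matrix.det_fromBlocks_zero₂₁]; simp
  have hdD : Dm.det = (∏ k : Fin d, (a k.succ)⁻¹) * (a 0)⁻¹ := by
    rw [hDdef, Matrix.det_fromBlocks_zero₂₁, Matrix.det_diagonal, Matrix.det_unique]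
    simp
  rw [Matrix.det_mul, Matrix.det_mul, hdP, hdD, mul_one] at hdet
  rw [auxM_det, auxM_det] at hdet
  rw [← hdet, Fin.prod_univ_succ, mul_inv, ← Finset.prod_inv_distrib]
  ring


noncomputable def auxW (d : ℕ) : Fin (d + 1) → Fin d → ℝ := fun k =>
  Fin.cases 0 (fun j => Pi.single j 1) k

lemma aux_volume (z : Fin (d + 1) → Fin d → ℝ) :
    volume (convexHull ℝ (Set.range z))
      = ENNReal.ofReal |(auxB z).det| * volume (convexHull ℝ (Set.range (auxW d))) := by
  set L := Matrix.toLin' (auxB z) with hL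
  set aff : (Fin d → ℝ) →ᵃ[ℝ] (Fin d → ℝ) :=
    L.toAffineMap + AffineMap.const ℝ (Fin d → ℝ) (z 0) with haffdef
  have haff : ∀ y, aff y = L y + z 0 := fun y => rfl
  have hzw : z = aff ∘ auxW d := by
    funext k
    induction k using Fin.cases with
    | zero =>
      simp [haff, auxW, hL, Matrix.toLin'_apply]
    | succ j =>
      funext i
      simp [haff, auxW, hL, Matrix.toLin'_apply, Matrix.mulVec_single, auxB]
  have himg : convexHull ℝ (Set.range z)
      = aff '' convexHull ℝ (Set.range (auxW d)) := by
    rw [AffineMap.image_convexHull, ← Set.range_comp, ← hzw]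
  have h2 : aff '' convexHull ℝ (Set.range (auxW d))
      = z 0 +ᵥ (L '' convexHull ℝ (Set.range (auxW d))) := by
    ext u
    simp only [Set.mem_image, Set.mem_vadd_set, haff]
    constructor
    · rintro ⟨y, hy, rfl⟩; exact ⟨L y, ⟨y, hy, rfl⟩, by simp [vadd_eq_add, add_comm]⟩
    · rintro ⟨v, ⟨y, hy, rfl⟩, rfl⟩; exact ⟨y, hy, by simp [vadd_eq_add, add_comm]⟩
  rw [himg, h2, measure_vadd, Measure.addHaar_image_linearMap, hL, LinearMap.det_toLin']


noncomputable def auxL (t : Fin d → ℝ) : (Fin d → ℝ) →L[ℝ] ℝ :=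
  LinearMap.toContinuousLinearMap
    { toFun := fun h => ∑ i, h i * t i
      map_add' := by intro h g; simp [add_mul, Finset.sum_add_distrib]
      map_smul' := by intro c h; simp [Finset.mul_sum, mul_assoc] }

lemma auxL_apply (t h : Fin d → ℝ) : auxL t h = ∑ i, h i * t i := by
  simp [auxL]

noncomputable def auxD (t : Fin d → ℝ) (y : Fin d → ℝ) : (Fin d → ℝ) →L[ℝ] (Fin d → ℝ) :=
  (1 - ∑ i, y i * t i)⁻¹ • ContinuousLinearMap.id ℝ (Fin d → ℝ) +
    (((1 - ∑ i, y i * t i) ^ 2)⁻¹ • auxL t).smulRight y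

lemma auxD_hasFDerivAt (t : Fin d → ℝ) (y : Fin d → ℝ) (hy : (1 - ∑ i, y i * t i) ≠ 0) :
    HasFDerivAt (fun u => (1 - ∑ i, u i * t i)⁻¹ • u) (auxD t y) y := by
  have h1 : HasFDerivAt (fun u : Fin d → ℝ => 1 - ∑ i, u i * t i) (-auxL t) y := by
    have hfun : (fun u : Fin d → ℝ => 1 - ∑ i, u i * t i) = fun u => 1 - auxL t u := by
      funext u; rw [auxL_apply]
    rw [hfun]
    exact ((auxL t).hasFDerivAt (x := y)).const_sub 1
  have h2 : HasFDerivAt (fun u : Fin d → ℝ => (1 - ∑ i, u i * t i)⁻¹)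
      (((1 - ∑ i, y i * t i) ^ 2)⁻¹ • auxL t) y := by
    have := (hasDerivAt_inv hy).comp_hasFDerivAt y h1
    simpa [Function.comp_def] using this
  simpa [auxD] using h2.smul (hasFDerivAt_id y)

lemma auxD_det (t : Fin d → ℝ) (y : Fin d → ℝ) (hy : (1 - ∑ i, y i * t i) ≠ 0) :
    (auxD t y).det = ((1 - ∑ i, y i * t i)⁻¹) ^ (d + 1) := by
  set s := ∑ i, y i * t i with hs
  set c := (1 - s)⁻¹ with hc
  set A : Matrix (Fin d) (Fin d) ℝ :=
    c • (1 + Matrix.replicateCol Unit (c • y) * Matrix.replicateRow Unit t) with hA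
  have hlin : (auxD t y).toLinearMap = Matrix.toLin' A := by
    apply LinearMap.ext
    intro h
    funext i
    have hval : (auxD t y) h = c • h + (c ^ 2 * ∑ j, h j * t j) • y := by
      have : ((1 - s) ^ 2)⁻¹ = c ^ 2 := by rw [hc, inv_pow]
      simp [auxD, auxL_apply, ← hs, this, ← hc]
    rw [ContinuousLinearMap.coe_coe, hval]
    simp only [Matrix.toLin'_apply, Matrix.mulVec, dotProduct, hA,
      Matrix.smul_apply, Matrix.add_apply, Matrix.one_apply, Matrix.mul_apply,
      Fintype.sum_unique, Matrix.replicateCol_apply, Matrix.replicateRow_apply, Pi.add_apply,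
      Pi.smul_apply, smul_eq_mul]
    have expand : ∀ j : Fin d, c * ((if i = j then (1:ℝ) else 0) + c * y i * t j) * h j
        = (if i = j then c * h j else 0) + c ^ 2 * y i * (t j * h j) := by
      intro j; by_cases hij : i = j <;> simp [hij] <;> ring
    rw [Finset.sum_congr rfl fun j _ => expand j, Finset.sum_add_distrib,
      Finset.sum_ite_eq univ i (fun j => c * h j), ← Finset.mul_sum,
      Finset.sum_congr rfl fun j _ => mul_comm (t j) (h j)]
    simp; ring
  have hdet : (auxD t y).det = A.det := by
    rw [ContinuousLinearMap.det, hlin, LinearMap.det_toLin']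
  rw [hdet, hA, Matrix.det_smul, Matrix.det_one_add_replicateCol_mul_replicateRow]
  have : t ⬝ᵥ (c • y) = c * s := by
    simp [dotProduct, hs, Finset.mul_sum]
    exact Finset.sum_congr rfl fun i _ => by ring
  rw [this]
  have h1cs : 1 + c * s = c := by
    rw [hc]
    field_simp
    ring
  rw [h1cs, Fintype.card_fin, pow_succ]

lemma aux_sum_smul {n d : ℕ} (w : Fin n → ℝ) (x : Fin n → Fin d → ℝ) (t : Fin d → ℝ) :
    ∑ i, (∑ k, w k • x k) i * t i = ∑ k, w k * ∑ i, x k i * t i := by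
  simp only [Finset.sum_apply, Pi.smul_apply, smul_eq_mul, Finset.sum_mul, Finset.mul_sum,
    mul_assoc]
  rw [Finset.sum_comm]

lemma aux_exists_pos {n : ℕ} (w : Fin n → ℝ) (hw1 : ∑ k, w k = 1) : ∃ k, 0 < w k := by
  obtain ⟨k, -, hk⟩ := Finset.exists_lt_of_sum_lt (f := fun _ : Fin n => (0:ℝ)) (g := w)
    (by rw [hw1]; simp)
  exact ⟨k, hk⟩

lemma aux_hull_lt {d : ℕ} (x : Fin (d + 1) → Fin d → ℝ) (t : Fin d → ℝ)
    (ht : ∀ k, ∑ i, x k i * t i < 1) :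
    ∀ y ∈ convexHull ℝ (Set.range x), ∑ i, y i * t i < 1 := by
  intro y hy
  obtain ⟨w, hw0, hw1, hwy⟩ := (aux_mem_hull_iff x y).1 hy
  obtain ⟨k0, hk0⟩ := aux_exists_pos w hw1
  rw [← hwy, aux_sum_smul]
  calc ∑ k, w k * ∑ i, x k i * t i < ∑ k, w k := by
        refine Finset.sum_lt_sum (fun k _ => ?_) ⟨k0, Finset.mem_univ _, ?_⟩
        · calc w k * ∑ i, x k i * t i ≤ w k * 1 :=
                mul_le_mul_of_nonneg_left (ht k).le (hw0 k)
            _ = w k := mul_one _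
        · calc w k0 * ∑ i, x k0 i * t i < w k0 * 1 :=
                mul_lt_mul_of_pos_left (ht k0) hk0
            _ = w k0 := mul_one _
    _ = 1 := hw1

lemma aux_injOn {d : ℕ} (t : Fin d → ℝ) :
    Set.InjOn (fun y : Fin d → ℝ => (1 - ∑ i, y i * t i)⁻¹ • y)
      {y | ∑ i, y i * t i < 1} := by
  intro y hy z hz hfyz
  simp only [Set.mem_setOf_eq] at hy hz
  set sy := ∑ i, y i * t i with hsy
  set sz := ∑ i, z i * t i with hsz
  have h1 : (0:ℝ) < 1 - sy := by linarith
  have h2 : (0:ℝ) < 1 - sz := by linarith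
  have hsum := congrArg (fun u : Fin d → ℝ => ∑ i, u i * t i) hfyz
  simp only [Pi.smul_apply, smul_eq_mul, mul_assoc, ← Finset.mul_sum] at hsum
  rw [← hsy, ← hsz] at hsum
  have hss : sy = sz := by
    field_simp at hsum
    nlinarith [hsum]
  have hfyz' : (1 - sy)⁻¹ • y = (1 - sz)⁻¹ • z := hfyz
  rw [← hss] at hfyz'
  exact smul_right_injective (Fin d → ℝ) (inv_ne_zero h1.ne') hfyz'

lemma aux_image {d : ℕ} (x : Fin (d + 1) → Fin d → ℝ) (t : Fin d → ℝ)
    (ht : ∀ k, ∑ i, x k i * t i < 1) :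
    (fun y : Fin d → ℝ => (1 - ∑ i, y i * t i)⁻¹ • y) '' (convexHull ℝ (Set.range x))
      = convexHull ℝ (Set.range fun k => (1 - ∑ i, x k i * t i)⁻¹ • x k) := by
  set a : Fin (d + 1) → ℝ := fun k => 1 - ∑ i, x k i * t i with ha
  have ha0 : ∀ k, (0:ℝ) < a k := fun k => by simp only [ha]; linarith [ht k]
  ext z
  rw [Set.mem_image]
  constructor
  · rintro ⟨y, hy, rfl⟩
    obtain ⟨w, hw0, hw1, hwy⟩ := (aux_mem_hull_iff x y).1 hy
    have hys : ∑ i, y i * t i = ∑ k, w k * ∑ i, x k i * t i := by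
      rw [← hwy, aux_sum_smul]
    have hS : 1 - ∑ i, y i * t i = ∑ k, w k * a k := by
      rw [hys, ← hw1, ← Finset.sum_sub_distrib]
      exact Finset.sum_congr rfl fun k _ => by rw [ha]; ring
    have hSpos : (0:ℝ) < 1 - ∑ i, y i * t i := by
      have := aux_hull_lt x t ht y hy; linarith
    rw [aux_mem_hull_iff]
    refine ⟨fun k => (w k * a k) / (1 - ∑ i, y i * t i), fun k =>
      div_nonneg (mul_nonneg (hw0 k) (ha0 k).le) hSpos.le, ?_, ?_⟩
    · rw [← Finset.sum_div, ← hS, div_self hSpos.ne']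
    · have hcomp : ∀ k : Fin (d + 1),
          (w k * a k / (1 - ∑ i, y i * t i)) • ((1 - ∑ i, x k i * t i)⁻¹ • x k)
            = ((1 - ∑ i, y i * t i)⁻¹ • (w k • x k)) := by
        intro k
        rw [smul_smul, smul_smul]
        congr 1
        have hak : a k = 1 - ∑ i, x k i * t i := rfl
        rw [← hak]
        field_simp [(ha0 k).ne']
      rw [Finset.sum_congr rfl fun k _ => hcomp k, ← Finset.smul_sum, hwy]
  · intro hz
    obtain ⟨u, hu0, hu1, huz⟩ :=
      (aux_mem_hull_iff (fun k => (1 - ∑ i, x k i * t i)⁻¹ • x k) z).1 hz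
    set T := ∑ k, u k * (a k)⁻¹ with hT
    have hterm : ∀ k, 0 ≤ u k * (a k)⁻¹ := fun k =>
      mul_nonneg (hu0 k) (inv_nonneg.2 (ha0 k).le)
    obtain ⟨k0, hk0⟩ := aux_exists_pos u hu1
    have hTpos : (0:ℝ) < T := by
      have hle : u k0 * (a k0)⁻¹ ≤ T :=
        Finset.single_le_sum (fun k _ => hterm k) (Finset.mem_univ k0)
      have : (0:ℝ) < u k0 * (a k0)⁻¹ := mul_pos hk0 (inv_pos.2 (ha0 k0))
      linarith
    set w : Fin (d + 1) → ℝ := fun k => (u k * (a k)⁻¹) / T with hw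
    have hw1 : ∑ k, w k = 1 := by
      simp only [hw, ← Finset.sum_div, ← hT, div_self hTpos.ne']
    set y := ∑ k, w k • x k with hy
    have hymem : y ∈ convexHull ℝ (Set.range x) :=
      (aux_mem_hull_iff x y).2 ⟨w, fun k => div_nonneg (hterm k) hTpos.le, hw1, rfl⟩
    refine ⟨y, hymem, ?_⟩
    have h1y : 1 - ∑ i, y i * t i = T⁻¹ := by
      have hys : ∑ i, y i * t i = ∑ k, w k * ∑ i, x k i * t i := by
        rw [hy, aux_sum_smul]
      rw [hys, ← hw1, ← Finset.sum_sub_distrib]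
      have : ∀ k, w k - w k * ∑ i, x k i * t i = u k / T := by
        intro k
        rw [hw]
        have : (1:ℝ) - ∑ i, x k i * t i = a k := rfl
        field_simp [(ha0 k).ne']
        ring
      rw [Finset.sum_congr rfl fun k _ => this k, ← Finset.sum_div, hu1]
      rw [one_div]
    rw [h1y, inv_inv, ← huz, hy, Finset.smul_sum]
    refine Finset.sum_congr rfl fun k _ => ?_
    rw [smul_smul, smul_smul]
    congr 1
    rw [hw]
    have : (1:ℝ) - ∑ i, x k i * t i = a k := rfl
    rw [this]
    field_simp [(ha0 k).ne', hTpos.ne']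

/-- For a `d`-dimensional simplex `σ = conv{x_1, …, x_{d+1}} ⊆ ℝ^d`
(the `x_k` affinely independent) and any `t ∈ ℝ^d` with `⟨x_k, t⟩ < 1` for every vertex,
`∫_σ (1 − ⟨x, t⟩)^{−(d+1)} dλ(x) = λ(σ) / ∏_{k} (1 − ⟨x_k, t⟩)`. -/
theorem stmt_0 (d : ℕ) (x : Fin (d + 1) → (Fin d → ℝ))
    (hx : AffineIndependent ℝ x)
    (t : Fin d → ℝ) (ht : ∀ k, ∑ i, x k i * t i < 1) :
    ∫ y in convexHull ℝ (Set.range x), ((1 - ∑ i, y i * t i) ^ (d + 1))⁻¹ ∂volume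
      = (volume (convexHull ℝ (Set.range x))).toReal / ∏ k, (1 - ∑ i, x k i * t i) := by
  have ha0 : ∀ k, (0:ℝ) < 1 - ∑ i, x k i * t i := fun k => by linarith [ht k]
  have haσ := aux_hull_lt x t ht
  have hmeas : MeasurableSet (convexHull ℝ (Set.range x)) :=
    ((Set.finite_range x).isCompact_convexHull ℝ).isClosed.measurableSet
  have hf' : ∀ y ∈ convexHull ℝ (Set.range x),
      HasFDerivWithinAt (fun u : Fin d → ℝ => (1 - ∑ i, u i * t i)⁻¹ • u)
        (auxD t y) (convexHull ℝ (Set.range x)) y := fun y hy =>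
    (auxD_hasFDerivAt t y (by have := haσ y hy; linarith)).hasFDerivWithinAt
  have hinj : Set.InjOn (fun y : Fin d → ℝ => (1 - ∑ i, y i * t i)⁻¹ • y)
      (convexHull ℝ (Set.range x)) :=
    (aux_injOn t).mono fun y hy => haσ y hy
  have hCOV := integral_image_eq_integral_abs_det_fderiv_smul volume hmeas hf' hinj
    (fun _ => (1:ℝ))
  rw [aux_image x t ht, setIntegral_const] at hCOV
  have hprod : (0:ℝ) < ∏ k, (1 - ∑ i, x k i * t i) :=
    Finset.prod_pos fun k _ => ha0 k
  have hRHS : ∫ y in convexHull ℝ (Set.range x), |(auxD t y).det| • (1:ℝ) ∂volume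
      = ∫ y in convexHull ℝ (Set.range x), ((1 - ∑ i, y i * t i) ^ (d + 1))⁻¹ ∂volume := by
    refine setIntegral_congr_fun hmeas fun y hy => ?_
    have hpos : (0:ℝ) < 1 - ∑ i, y i * t i := by have := haσ y hy; linarith
    rw [auxD_det t y hpos.ne', smul_eq_mul, mul_one,
      abs_of_pos (pow_pos (inv_pos.2 hpos) _), inv_pow]
  rw [hRHS] at hCOV
  rw [← hCOV]
  have hBdet : (auxB fun k => (1 - ∑ i, x k i * t i)⁻¹ • x k).det
      = (∏ k, (1 - ∑ i, x k i * t i))⁻¹ * (auxB x).det :=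
    auxB_det x (fun k => 1 - ∑ i, x k i * t i) t (fun k => rfl) (fun k => (ha0 k).ne')
  have h1 := aux_volume (fun k => (1 - ∑ i, x k i * t i)⁻¹ • x k)
  have h2 := aux_volume x
  rw [measureReal_def, h1, hBdet, abs_mul, abs_of_pos (inv_pos.2 hprod),
    ENNReal.ofReal_mul (inv_pos.2 hprod).le, mul_assoc, ← h2, smul_eq_mul, mul_one,
    ENNReal.toReal_mul, ENNReal.toReal_ofReal (inv_pos.2 hprod).le,
    div_eq_mul_inv, mul_comm]
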